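/- Let n ≥ 3 and let r = ⌊n/2⌋. Then the compound curling number of the r-th power of the path graph P_n equals 2^r. -/

import Mathlib

open Finset

/-- The degree of a vertex `v` in a simple graph `G`: the number of its neighbours. -/
noncomputable def gdeg {V : Type*} (G : SimpleGraph V) (v : V) : ℕ :=
  (G.neighborSet v).ncard

/-- The compound curling number of a finite simple graph: the product, over all
values `d` occurring as a vertex degree of `G`, of the number of vertices of degree `d`. -/
noncomputable def compoundCurlingNumber {V : Type*} [Fintype V] (G : SimpleGraph V) : ℕ :=
  ∏ d ∈ Finset.univ.image (gdeg G), (Finset.univ.filter fun u => gdeg G u = d).card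

/-- The `r`-th power of a simple graph `G`: same vertex set, two distinct vertices
adjacent iff their distance in `G` is (finite and) at most `r`. -/
def SimpleGraph.power {V : Type*} (G : SimpleGraph V) (r : ℕ) : SimpleGraph V where
  Adj u v := u ≠ v ∧ G.Reachable u v ∧ G.dist u v ≤ r
  symm := by
    constructor
    rintro u v ⟨h1, h2, h3⟩
    exact ⟨h1.symm, h2.symm, by rwa [SimpleGraph.dist_comm]⟩
  loopless := by
    constructor
    rintro v ⟨h1, -, -⟩
    exact h1 rfl


lemma pg_walk_exists (n : ℕ) : ∀ (k : ℕ) (u v : Fin n), u.val + k = v.val →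
    ∃ p : (SimpleGraph.pathGraph n).Walk u v, p.length = k := by
  intro k
  induction k with
  | zero =>
    intro u v h
    have : u = v := Fin.ext (by omega)
    subst this
    exact ⟨.nil, rfl⟩
  | succ k ih =>
    intro u v h
    have hv := v.isLt
    have hu1 : u.val + 1 < n := by omega
    have hadj : (SimpleGraph.pathGraph n).Adj u ⟨u.val + 1, hu1⟩ := by
      rw [SimpleGraph.pathGraph_adj]; left; rfl
    obtain ⟨p, hp⟩ := ih ⟨u.val + 1, hu1⟩ v (by simp; omega)
    exact ⟨.cons hadj p, by simp [hp]⟩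

lemma pg_walk_ge {n : ℕ} {u v : Fin n} (p : (SimpleGraph.pathGraph n).Walk u v) :
    Nat.dist u.val v.val ≤ p.length := by
  induction p with
  | nil => simp [Nat.dist]
  | @cons a b c h p ih =>
    rw [SimpleGraph.pathGraph_adj] at h
    simp only [SimpleGraph.Walk.length_cons]
    simp only [Nat.dist] at *
    omega

lemma pg_dist (n : ℕ) (u v : Fin n) :
    (SimpleGraph.pathGraph n).dist u v = Nat.dist u.val v.val := by
  have hr : (SimpleGraph.pathGraph n).Reachable u v :=
    SimpleGraph.pathGraph_preconnected n u v
  apply le_antisymm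
  · rcases le_total u.val v.val with h | h
    · obtain ⟨p, hp⟩ := pg_walk_exists n (v.val - u.val) u v (by omega)
      have := SimpleGraph.dist_le p
      rw [hp] at this
      simp only [Nat.dist]
      omega
    · obtain ⟨p, hp⟩ := pg_walk_exists n (u.val - v.val) v u (by omega)
      have := SimpleGraph.dist_le p.reverse
      rw [SimpleGraph.Walk.length_reverse, hp] at this
      simp only [Nat.dist]
      omega
  · obtain ⟨p, hp⟩ := hr.exists_walk_length_eq_dist
    rw [← hp]
    exact pg_walk_ge p

lemma gdeg_power_pathGraph (n r : ℕ) (hn : 3 ≤ n) (hr : r = n / 2) (i : Fin n) :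
    gdeg ((SimpleGraph.pathGraph n).power r) i = r + min i.val (n - 1 - i.val) := by
  classical
  have hi := i.isLt
  have hset : ((SimpleGraph.pathGraph n).power r).neighborSet i
      = ↑(univ.filter fun j : Fin n => j.val ≠ i.val ∧ Nat.dist i.val j.val ≤ r) := by
    ext j
    simp only [SimpleGraph.mem_neighborSet, SimpleGraph.power, pg_dist, coe_filter,
      Set.mem_setOf_eq, mem_univ, true_and, ne_eq, Fin.ext_iff]
    constructor
    · rintro ⟨h1, -, h3⟩; exact ⟨fun h => h1 h.symm, h3⟩
    · rintro ⟨h1, h2⟩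
      exact ⟨fun h => h1 (by rw [h]), SimpleGraph.pathGraph_preconnected n i j, h2⟩
  rw [gdeg, hset, Set.ncard_coe_finset]
  have hsum : (univ.filter fun j : Fin n => j.val ≠ i.val ∧ Nat.dist i.val j.val ≤ r).card
      = ((Finset.range n).filter fun m => m ≠ i.val ∧ Nat.dist i.val m ≤ r).card := by
    rw [Finset.card_filter, Finset.card_filter]
    exact Fin.sum_univ_eq_sum_range
      (fun m => if m ≠ i.val ∧ Nat.dist i.val m ≤ r then 1 else 0) n
  rw [hsum]
  have heq : (Finset.range n).filter (fun m => m ≠ i.val ∧ Nat.dist i.val m ≤ r)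
      = (Finset.Ico (i.val - r) (min n (i.val + r + 1))) \ {i.val} := by
    ext m
    rw [mem_filter]
    simp only [mem_filter, mem_range, mem_sdiff, mem_Ico, mem_singleton, Nat.dist]
    omega
  rw [heq, Finset.card_sdiff_of_subset (by simp [mem_Ico]), Nat.card_Ico, card_singleton]
  omega

/-- For `n ≥ 3` and `r = ⌊n/2⌋`, the compound curling number of the `r`-th
power of the path graph `P_n` is `2 ^ r`. -/
theorem compoundCurlingNumber_pathGraph_power_half (n r : ℕ) (hn : 3 ≤ n) (hr : r = n / 2) :
    compoundCurlingNumber ((SimpleGraph.pathGraph n).power r) = 2 ^ r := by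
  classical
  have hg : gdeg ((SimpleGraph.pathGraph n).power r)
      = fun i : Fin n => r + min i.val (n - 1 - i.val) :=
    funext fun i => gdeg_power_pathGraph n r hn hr i
  unfold compoundCurlingNumber
  rw [hg]
  have himg : (univ : Finset (Fin n)).image (fun i => r + min i.val (n - 1 - i.val))
      = (Finset.range (n - r)).image (fun j => r + j) := by
    ext k
    simp only [mem_image, mem_univ, true_and, mem_range]
    constructor
    · rintro ⟨i, rfl⟩
      exact ⟨min i.val (n - 1 - i.val), by have := i.isLt; omega, rfl⟩
    · rintro ⟨j, hj, rfl⟩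
      refine ⟨⟨j, by omega⟩, ?_⟩
      simp only []
      omega
  rw [himg, Finset.prod_image (fun x _ y _ h => by omega)]
  have hfib : ∀ j ∈ Finset.range (n - r),
      (univ.filter fun u : Fin n => r + min u.val (n - 1 - u.val) = r + j).card
        = if 2 * j + 1 = n then 1 else 2 := by
    intro j hj
    rw [mem_range] at hj
    by_cases hodd : 2 * j + 1 = n
    · rw [if_pos hodd]
      have he : (univ.filter fun u : Fin n => r + min u.val (n - 1 - u.val) = r + j)
          = {(⟨j, by omega⟩ : Fin n)} := by
        ext u
        simp only [mem_filter, mem_univ, true_and, mem_singleton, Fin.ext_iff]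
        have := u.isLt
        omega
      rw [he, card_singleton]
    · rw [if_neg hodd]
      have he : (univ.filter fun u : Fin n => r + min u.val (n - 1 - u.val) = r + j)
          = {(⟨j, by omega⟩ : Fin n), (⟨n - 1 - j, by omega⟩ : Fin n)} := by
        ext u
        simp only [mem_filter, mem_univ, true_and, mem_insert, mem_singleton, Fin.ext_iff]
        have := u.isLt
        omega
      rw [he, card_insert_of_notMem (by simp only [mem_singleton, Fin.ext_iff]; omega),
        card_singleton]
  rw [Finset.prod_congr rfl hfib]
  rcases Nat.even_or_odd n with he | ho
  · obtain ⟨m, hm⟩ := he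
    have h2 : ∀ j ∈ Finset.range (n - r), (if 2 * j + 1 = n then 1 else 2) = 2 := by
      intro j hj; rw [if_neg]; omega
    rw [Finset.prod_congr rfl h2, Finset.prod_const, card_range]
    congr 1
    omega
  · obtain ⟨m, hm⟩ := ho
    have hnr : n - r = r + 1 := by omega
    rw [hnr, Finset.prod_range_succ, if_pos (by omega), mul_one]
    have h2 : ∀ j ∈ Finset.range r, (if 2 * j + 1 = n then 1 else 2) = 2 := by
      intro j hj; rw [mem_range] at hj; rw [if_neg]; omega
    rw [Finset.prod_congr rfl h2, Finset.prod_const, card_range]
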